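/- Algorithmic soundness (failure case): if the matching state machine, started with the empty substitution, empty backtracking stack, and continuation [match p against t], reaches the state failure after one or more steps, then there is no substitution θ such that p matches t under θ in the declarative semantics. -/

import Mathlib

namespace PyPM
/-- Terms over a signature of function symbols (names with lists of arguments). -/
inductive Tm where
  | app : String → List Tm → Tm


/-- Basic patterns: variables, function applications, and alternates. -/
inductive Pat where
  | var : String → Pat
  | app : String → List Pat → Pat
  | alt : Pat → Pat → Pat

/-- Substitutions: finite maps from variables to terms (modeled as partial functions). -/
abbrev Subst := String → Option Tm

def emptySubst : Subst := fun _ => none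

def Subst.update (θ : Subst) (x : String) (t : Tm) : Subst :=
  fun y => if y = x then some t else θ y

/-- θ ⊆ θ' : every binding of θ is a binding of θ'. -/
def Subst.le (θ θ' : Subst) : Prop := ∀ x t, θ x = some t → θ' x = some t

/-- Declarative matching semantics: θ ⊢ p ≈ t. -/
inductive Matches : Subst → Pat → Tm → Prop where
  | var {θ : Subst} {x : String} {t : Tm} :
      θ x = some t → Matches θ (.var x) t
  | app {θ : Subst} {f : String} {ps : List Pat} {ts : List Tm}
      (hlen : ps.length = ts.length)
      (hargs : ∀ i (h1 : i < ps.length) (h2 : i < ts.length), Matches θ ps[i] ts[i]) :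
      Matches θ (.app f ps) (.app f ts)
  | alt1 {θ : Subst} {p p' : Pat} {t : Tm} :
      Matches θ p t → Matches θ (.alt p p') t
  | alt2 {θ : Subst} {p p' : Pat} {t : Tm} :
      Matches θ p' t → Matches θ (.alt p p') t

/-- Actions in the machine continuation. -/
inductive Action where
  | doMatch : Pat → Tm → Action

abbrev Cont := List Action
abbrev Frame := Subst × Cont
abbrev Stack := List Frame

/-- Machine states. -/
inductive St where
  | success : Subst → St
  | failure : St
  | running : Subst → Stack → Cont → St

/-- Backtracking: pop the stack, or fail if it is empty. -/
def backtrack : Stack → St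
  | [] => .failure
  | (θ, k) :: stk => .running θ stk k

/-- The step relation of the algorithmic matching machine. -/
inductive Step : St → St → Prop where
  | success {θ stk} :
      Step (.running θ stk []) (.success θ)
  | varBind {θ : Subst} {stk x t k} :
      θ x = none →
      Step (.running θ stk (.doMatch (.var x) t :: k)) (.running (θ.update x t) stk k)
  | varBound {θ : Subst} {stk x t k} :
      θ x = some t →
      Step (.running θ stk (.doMatch (.var x) t :: k)) (.running θ stk k)
  | varConflict {θ : Subst} {stk x t t' k} :
      θ x = some t' → t' ≠ t →
      Step (.running θ stk (.doMatch (.var x) t :: k)) (backtrack stk)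
  | fn {θ stk f ps ts k} :
      ps.length = ts.length →
      Step (.running θ stk (.doMatch (.app f ps) (.app f ts) :: k))
           (.running θ stk (((ps.zip ts).map fun pt => .doMatch pt.1 pt.2) ++ k))
  | fnConflict {θ stk f g ps ts k} :
      f ≠ g ∨ ps.length ≠ ts.length →
      Step (.running θ stk (.doMatch (.app f ps) (.app g ts) :: k)) (backtrack stk)
  | alt {θ stk p p' t k} :
      Step (.running θ stk (.doMatch (.alt p p') t :: k))
           (.running θ ((θ, .doMatch p' t :: k) :: stk) (.doMatch p t :: k))

end PyPM

open PyPM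

def ActSat (θ : Subst) : Action → Prop
  | .doMatch p t => Matches θ p t

def ContSat (σ : Subst) (k : Cont) : Prop :=
  ∃ θ, Subst.le σ θ ∧ ∀ a ∈ k, ActSat θ a

def StSat : St → Prop
  | .success _ => True
  | .failure => False
  | .running σ stk k => ContSat σ k ∨ ∃ f ∈ stk, ContSat f.1 f.2

lemma backtrack_sat {stk : Stack} (h : ∃ f ∈ stk, ContSat f.1 f.2) :
    StSat (backtrack stk) := by
  obtain ⟨f, hf, hs⟩ := h
  cases stk with
  | nil => simp at hf
  | cons hd tl =>
    simp only [backtrack, StSat]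
    rcases List.mem_cons.1 hf with rfl | hmem
    · exact Or.inl hs
    · exact Or.inr ⟨f, hmem, hs⟩

lemma step_pres {s s' : St} (hstep : Step s s') (hsat : StSat s) : StSat s' := by
  cases hstep with
  | success => trivial
  | @varBind θ stk x t k hx =>
    rcases hsat with ⟨θ', hle, hall⟩ | hstk
    · have hv := hall _ (List.mem_cons_self)
      have hvx : θ' x = some t := by cases hv with | var h => exact h
      refine Or.inl ⟨θ', ?_, fun a ha => hall a (List.mem_cons_of_mem _ ha)⟩
      intro y u hy
      unfold Subst.update at hy
      by_cases hxy : y = x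
      · simp [hxy] at hy; subst hy; rw [hxy]; exact hvx
      · simp [hxy] at hy; exact hle y u hy
    · exact Or.inr hstk
  | @varBound θ stk x t k hx =>
    rcases hsat with ⟨θ', hle, hall⟩ | hstk
    · exact Or.inl ⟨θ', hle, fun a ha => hall a (List.mem_cons_of_mem _ ha)⟩
    · exact Or.inr hstk
  | @varConflict θ stk x t t' k hx hne =>
    rcases hsat with ⟨θ', hle, hall⟩ | hstk
    · have hv := hall _ (List.mem_cons_self)
      have hvx : θ' x = some t := by cases hv with | var h => exact h
      have := hle x t' hx
      rw [this] at hvx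
      exact absurd (Option.some.inj hvx) hne
    · exact backtrack_sat hstk
  | @fn θ stk f ps ts k hlen =>
    rcases hsat with ⟨θ', hle, hall⟩ | hstk
    · have hv := hall _ (List.mem_cons_self)
      have hargs : ∀ i (h1 : i < ps.length) (h2 : i < ts.length),
          Matches θ' ps[i] ts[i] := by
        cases hv with | app _ h => exact h
      refine Or.inl ⟨θ', hle, fun a ha => ?_⟩
      rcases List.mem_append.1 ha with hmem | hmem
      · obtain ⟨pt, hpt, rfl⟩ := List.mem_map.1 hmem
        obtain ⟨i, hi, rfl⟩ := List.mem_iff_getElem.1 hpt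
        have hiz : i < (ps.zip ts).length := hi
        rw [List.length_zip] at hiz
        have h1 : i < ps.length := lt_of_lt_of_le hiz (min_le_left _ _)
        have h2 : i < ts.length := lt_of_lt_of_le hiz (min_le_right _ _)
        have hz : (ps.zip ts)[i] = (ps[i], ts[i]) := List.getElem_zip
        show ActSat θ' (.doMatch (ps.zip ts)[i].1 (ps.zip ts)[i].2)
        rw [hz]
        exact hargs i h1 h2
      · exact hall a (List.mem_cons_of_mem _ hmem)
    · exact Or.inr hstk
  | @fnConflict θ stk f g ps ts k hne =>
    rcases hsat with ⟨θ', hle, hall⟩ | hstk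
    · have hv := hall _ (List.mem_cons_self)
      cases hv with
      | app hlen _ =>
        rcases hne with h | h
        · exact absurd rfl h
        · exact absurd hlen h
    · exact backtrack_sat hstk
  | @alt θ stk p p' t k =>
    rcases hsat with ⟨θ', hle, hall⟩ | hstk
    · have hv := hall _ (List.mem_cons_self)
      have hrest : ∀ a ∈ k, ActSat θ' a := fun a ha => hall a (List.mem_cons_of_mem _ ha)
      cases hv with
      | alt1 h =>
        refine Or.inl ⟨θ', hle, fun a ha => ?_⟩
        rcases List.mem_cons.1 ha with rfl | hmem
        · exact h
        · exact hrest a hmem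
      | alt2 h =>
        refine Or.inr ⟨(θ, .doMatch p' t :: k), List.mem_cons_self, θ', hle, fun a ha => ?_⟩
        rcases List.mem_cons.1 ha with rfl | hmem
        · exact h
        · exact hrest a hmem
    · obtain ⟨f, hf, hs⟩ := hstk
      exact Or.inr ⟨f, List.mem_cons_of_mem _ hf, hs⟩

lemma sat_trans {s s' : St} (h : Relation.TransGen Step s s') (hs : StSat s) : StSat s' := by
  induction h with
  | single h1 => exact step_pres h1 hs
  | tail _ h1 ih => exact step_pres h1 ih

/-- Algorithmic soundness (failure case). -/
theorem alg_soundness_failure {p : Pat} {t : Tm}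
    (h : Relation.TransGen Step (.running emptySubst [] [.doMatch p t]) .failure) :
    ¬ ∃ θ : Subst, Matches θ p t := by
  rintro ⟨θ, hm⟩
  have hinit : StSat (.running emptySubst [] [.doMatch p t]) := by
    refine Or.inl ⟨θ, fun x u hx => by simp [emptySubst] at hx, ?_⟩
    intro a ha
    rcases List.mem_cons.1 ha with rfl | hmem
    · exact hm
    · simp at hmem
  exact sat_trans h hinit
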